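/- Let E be a real Banach space and S a C0-semigroup on E. If t, s ≥ 0 satisfy S(t) ≠ S(s), and one defines the operators R(t)f(x) := f(S(t)x) on the space of bounded uniformly continuous functions BUC(E), then there exists f ∈ BUC(E) with ‖f‖_∞ ≤ 1 and a point x₀ ∈ E such that |R(t)f(x₀) - R(s)f(x₀)| = 2. In particular ‖R(t) - R(s)‖ in the operator norm on BUC(E) equals 2. -/

import Mathlib

lemma exists_buc_sep {E : Type*} [NormedAddCommGroup E] [NormedSpace ℝ E] [CompleteSpace E]
    {a b : E} (hab : a ≠ b) :
    ∃ f : E → ℝ, UniformContinuous f ∧ (∀ x, |f x| ≤ 1) ∧ |f a - f b| = 2 := by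
  have hv : a - b ≠ 0 := sub_ne_zero.mpr hab
  obtain ⟨g, hg1, hgv⟩ := exists_dual_vector ℝ (a - b) (norm_ne_zero_iff.mpr hv)
  have hcos : LipschitzWith 1 Real.cos := by
    apply lipschitzWith_of_nnnorm_deriv_le Real.differentiable_cos
    intro x
    rw [Real.deriv_cos]
    rw [← NNReal.coe_le_coe]
    simpa using Real.abs_sin_le_one x
  set h : E →L[ℝ] ℝ := (Real.pi / ‖a - b‖) • g with hh
  refine ⟨fun x => Real.cos (h (x - b)), ?_, ?_, ?_⟩
  · exact hcos.uniformContinuous.comp (h.uniformContinuous.comp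
      (uniformContinuous_id.sub uniformContinuous_const))
  · intro x
    exact Real.abs_cos_le_one _
  · have hnorm : ‖a - b‖ ≠ 0 := norm_ne_zero_iff.mpr hv
    have h1 : g (a - b) = (‖a - b‖ : ℝ) := by exact_mod_cast hgv
    have ha : h (a - b) = Real.pi := by
      rw [hh, ContinuousLinearMap.smul_apply, h1, smul_eq_mul]
      field_simp
    have hb : h (b - b) = 0 := by simp
    simp only [ha, hb, Real.cos_pi, Real.cos_zero]
    norm_num

/-- For a `C₀`-semigroup `S` on a real Banach space and `t, s ≥ 0` with `S t ≠ S s`,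
considering the drift operators `R(τ)f = f ∘ S τ` on `BUC(E)`: there is an
`f ∈ BUC(E)` with `‖f‖_∞ ≤ 1` and a point `x₀` with `|R(t)f(x₀) - R(s)f(x₀)| = 2`;
in particular the operator norm `‖R(t) - R(s)‖` on `BUC(E)` equals `2`, i.e. `2` is
the greatest value of `|f (S t x) - f (S s x)|` over `f ∈ BUC(E)`, `‖f‖_∞ ≤ 1`, `x ∈ E`. -/
theorem stmt2 {E : Type*} [NormedAddCommGroup E] [NormedSpace ℝ E] [CompleteSpace E]
    (S : ℝ → E →L[ℝ] E)
    (hS0 : S 0 = 1)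
    (hSadd : ∀ t ≥ (0:ℝ), ∀ u ≥ (0:ℝ), S (t + u) = (S t).comp (S u))
    (hScont : ∀ x : E, ContinuousOn (fun t => S t x) (Set.Ici (0:ℝ)))
    (t s : ℝ) (ht : 0 ≤ t) (hs : 0 ≤ s) (hne : S t ≠ S s) :
    (∃ (f : E → ℝ) (x₀ : E), UniformContinuous f ∧ (∀ x, |f x| ≤ 1) ∧
        |f (S t x₀) - f (S s x₀)| = 2) ∧
    IsGreatest {c : ℝ | ∃ (f : E → ℝ) (x : E), UniformContinuous f ∧ (∀ z, |f z| ≤ 1) ∧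
        c = |f (S t x) - f (S s x)|} 2 := by
  obtain ⟨x₀, hx₀⟩ : ∃ x₀ : E, S t x₀ ≠ S s x₀ := by
    by_contra h
    push_neg at h
    exact hne (ContinuousLinearMap.ext h)
  obtain ⟨f, hfu, hfb, hf2⟩ := exists_buc_sep hx₀
  refine ⟨⟨f, x₀, hfu, hfb, hf2⟩, ⟨f, x₀, hfu, hfb, hf2.symm⟩, ?_⟩
  rintro c ⟨g, x, -, hgb, rfl⟩
  calc |g (S t x) - g (S s x)| ≤ |g (S t x)| + |g (S s x)| := abs_sub _ _
    _ ≤ 1 + 1 := add_le_add (hgb _) (hgb _)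
    _ = 2 := by norm_num
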